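/- Let q be an annular link state on Z/n with t ≥ 1 defects, and p its rotation by one place. Then the pair graph Γ(q,p) has exactly t connected components, each of which is a path (contractible) containing exactly one defect of q and exactly one defect of p. If t = 0, then Γ(q,p) is a single cycle through all n vertices. -/

import Mathlib

open scoped Classical

/-- `k` lies in the open cyclic interval `(i, j)` of `ZMod n`. -/
def cyclicBetween (n : ℕ) [NeZero n] (i j k : ZMod n) : Prop :=
  ∃ m : ℕ, 0 < m ∧ m < (j - i).val ∧ k = i + (m : ZMod n)

/-- An annular link state on `ZMod n`: a partition into parts of size 1 (defects) and 2
(connections, recorded in `pairs`) such that whenever `i` and `j` are connected, the open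
cyclic intervals `(i,j)` and `(j,i)` are unions of parts, and all defects lie in `(i,j)`
or all lie in `(j,i)`. -/
structure AnnularLS (n : ℕ) [NeZero n] where
  pairs : Finset (Finset (ZMod n))
  card_two : ∀ s ∈ pairs, s.card = 2
  disj : ∀ s ∈ pairs, ∀ t ∈ pairs, s ≠ t → Disjoint s t
  interval_closed : ∀ s ∈ pairs, ∀ i ∈ s, ∀ j ∈ s, i ≠ j →
    ∀ t ∈ pairs, ∀ k ∈ t, ∀ l ∈ t,
      cyclicBetween n i j k → cyclicBetween n i j l
  defects_one_side : ∀ s ∈ pairs, ∀ i ∈ s, ∀ j ∈ s, i ≠ j →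
    (∀ d : ZMod n, (∀ t ∈ pairs, d ∉ t) → cyclicBetween n i j d) ∨
    (∀ d : ZMod n, (∀ t ∈ pairs, d ∉ t) → cyclicBetween n j i d)

/-- The defects of an annular link state. -/
noncomputable def AnnularLS.defects {n : ℕ} [NeZero n] (q : AnnularLS n) :
    Finset (ZMod n) :=
  Finset.univ.filter (fun i => ∀ s ∈ q.pairs, i ∉ s)

/-- The pair graph of two link states: `i` and `j` are adjacent if some connection of one
of the two link states joins them. -/
def pairGraph (n : ℕ) [NeZero n] (q p : AnnularLS n) : SimpleGraph (ZMod n) :=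
  SimpleGraph.fromRel (fun i j => ∃ s ∈ q.pairs ∪ p.pairs, i ∈ s ∧ j ∈ s)

set_option linter.unusedSectionVars false

namespace Stmt12

variable {n : ℕ} [NeZero n]

/-- Arithmetic form of cyclic betweenness. -/
def btw (i j k : ZMod n) : Prop := 0 < (k - i).val ∧ (k - i).val < (j - i).val

lemma val_add_or (u v : ZMod n) :
    (u + v).val = u.val + v.val ∨ (u + v).val + n = u.val + v.val := by
  have h1 := ZMod.val_add u v
  have h2 := ZMod.val_lt u
  have h3 := ZMod.val_lt v
  rcases Nat.lt_or_ge (u.val + v.val) n with h | h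
  · rw [Nat.mod_eq_of_lt h] at h1; omega
  · have hlt : u.val + v.val - n < n := by omega
    rw [Nat.mod_eq_sub_mod h, Nat.mod_eq_of_lt hlt] at h1; omega

/-- The key linear fact for `omega`. -/
lemma zsub_val3 (b x y : ZMod n) :
    (x - y).val + (y - b).val = (x - b).val ∨
    (x - y).val + (y - b).val = (x - b).val + n := by
  have e : (x - y) + (y - b) = x - b := by ring
  rcases val_add_or (x - y) (y - b) with h | h <;> rw [e] at h <;> omega

lemma sub_val_zero {x y : ZMod n} : (x - y).val = 0 ↔ x = y := by
  rw [ZMod.val_eq_zero, sub_eq_zero]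

lemma sub_val_pos {x y : ZMod n} (h : x ≠ y) : 0 < (x - y).val :=
  Nat.pos_of_ne_zero (fun hz => h (sub_val_zero.mp hz))

lemma point_repr (k i : ZMod n) : k = i + ((k - i).val : ZMod n) := by
  rw [ZMod.natCast_rightInverse (k - i)]; ring

lemma cb_iff {i j k : ZMod n} : cyclicBetween n i j k ↔ btw i j k := by
  constructor
  · rintro ⟨m, hm0, hmlt, rfl⟩
    have hmn : m < n := lt_trans hmlt (ZMod.val_lt _)
    have e : i + (m : ZMod n) - i = (m : ZMod n) := by ring
    exact ⟨by rw [e, ZMod.val_cast_of_lt hmn]; omega,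
           by rw [e, ZMod.val_cast_of_lt hmn]; omega⟩
  · rintro ⟨h0, hl⟩
    exact ⟨(k - i).val, h0, hl, point_repr k i⟩

lemma btw_ne_left {i j k : ZMod n} (h : btw i j k) : k ≠ i := by
  intro he
  have h1 := h.1
  rw [he, sub_self, ZMod.val_zero] at h1
  exact lt_irrefl 0 h1

lemma btw_ne_right {i j k : ZMod n} (h : btw i j k) : k ≠ j := by
  intro he; rw [he] at h; exact absurd h.2 (lt_irrefl _)

lemma btw_ends_ne {i j k : ZMod n} (h : btw i j k) : i ≠ j := by
  intro he
  have h1 := h.1.trans h.2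
  rw [he, sub_self, ZMod.val_zero] at h1
  exact lt_irrefl 0 h1

lemma btw_rotate {i j k : ZMod n} (h : btw i j k) : btw k i j := by
  obtain ⟨h0, h1⟩ := h
  have e1 := zsub_val3 i j k
  have e2 := zsub_val3 i i k
  have b1 := ZMod.val_lt (j - i)
  have b2 := ZMod.val_lt (k - i)
  have b3 := ZMod.val_lt (i - k)
  have b4 := ZMod.val_lt (j - k)
  have z : (i - i).val = 0 := by simp [sub_self]
  constructor <;> omega

lemma btw_asymm {i j k : ZMod n} (h : btw i j k) : ¬ btw j i k := by
  rintro ⟨g0, g1⟩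
  obtain ⟨h0, h1⟩ := h
  have e1 := zsub_val3 i k j
  have e2 := zsub_val3 i i j
  have z : (i - i).val = 0 := by simp [sub_self]
  have b1 := ZMod.val_lt (k - j)
  have b2 := ZMod.val_lt (i - j)
  have b3 := ZMod.val_lt (j - i)
  omega

lemma btw_total {i j k : ZMod n} (hij : i ≠ j) (hki : k ≠ i) (hkj : k ≠ j) :
    btw i j k ∨ btw j i k := by
  have h1 : 0 < (k - i).val := sub_val_pos hki
  have h2 : 0 < (j - i).val := sub_val_pos (Ne.symm hij)
  rcases Nat.lt_trichotomy ((k - i).val) ((j - i).val) with h | h | h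
  · exact Or.inl ⟨h1, h⟩
  · exact absurd (by
      have := ZMod.val_injective n h
      have : k - i + i = j - i + i := by rw [this]
      simpa using this) hkj
  · right
    have e1 := zsub_val3 i k j
    have e2 := zsub_val3 i i j
    have z : (i - i).val = 0 := by simp [sub_self]
    have b1 := ZMod.val_lt (k - j)
    have b2 := ZMod.val_lt (i - j)
    have b3 := ZMod.val_lt (k - i)
    constructor <;> omega

lemma btw_nested {d a c v : ZMod n} (h1 : btw d a c) (h2 : btw c a v) : btw d a v := by
  obtain ⟨p1, p2⟩ := h1
  obtain ⟨q1, q2⟩ := h2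
  have e1 := zsub_val3 d v c
  have e2 := zsub_val3 d a c
  have b1 := ZMod.val_lt (v - d)
  have b2 := ZMod.val_lt (a - d)
  have b3 := ZMod.val_lt (v - c)
  have b4 := ZMod.val_lt (a - c)
  have b5 := ZMod.val_lt (c - d)
  constructor <;> omega

lemma btw_walk {y x u v : ZMod n} (h1 : btw y x u) (h2 : btw x y v) : btw u v x := by
  obtain ⟨p1, p2⟩ := h1
  obtain ⟨q1, q2⟩ := h2
  have e1 := zsub_val3 y v x
  have e2 := zsub_val3 y y x
  have e3 := zsub_val3 y x u
  have e4 := zsub_val3 y v u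
  have z : (y - y).val = 0 := by simp [sub_self]
  have b1 := ZMod.val_lt (x - y)
  have b2 := ZMod.val_lt (u - y)
  have b3 := ZMod.val_lt (v - y)
  have b4 := ZMod.val_lt (v - x)
  have b5 := ZMod.val_lt (y - x)
  have b6 := ZMod.val_lt (x - u)
  have b7 := ZMod.val_lt (v - u)
  constructor <;> omega

lemma btw_add {i j : ZMod n} {m : ℕ} (h0 : 0 < m) (h1 : m < (j - i).val) :
    btw i j (i + (m : ZMod n)) := by
  have hmn : m < n := lt_trans h1 (ZMod.val_lt _)
  have e : i + (m : ZMod n) - i = (m : ZMod n) := by ring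
  exact ⟨by rw [e, ZMod.val_cast_of_lt hmn]; omega,
         by rw [e, ZMod.val_cast_of_lt hmn]; omega⟩

lemma btw_shift {i j k z : ZMod n} : btw (i + z) (j + z) (k + z) ↔ btw i j k := by
  have e1 : k + z - (i + z) = k - i := by ring
  have e2 : j + z - (i + z) = j - i := by ring
  unfold btw; rw [e1, e2]

-- ### Structure-level lemmas

lemma mem_defects {q : AnnularLS n} {i : ZMod n} :
    i ∈ q.defects ↔ ∀ s ∈ q.pairs, i ∉ s := by
  simp [AnnularLS.defects]

lemma pair_mem_unique {q : AnnularLS n} {s t : Finset (ZMod n)} (hs : s ∈ q.pairs)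
    (ht : t ∈ q.pairs) {i : ZMod n} (his : i ∈ s) (hit : i ∈ t) : s = t := by
  by_contra hne
  exact absurd hit (Finset.disjoint_left.mp (q.disj s hs t ht hne) his)

lemma pair_eq_of_mem {s : Finset (ZMod n)} (h2 : s.card = 2) {i j : ZMod n}
    (hi : i ∈ s) (hj : j ∈ s) (hij : i ≠ j) : s = {i, j} := by
  have hsub : ({i, j} : Finset (ZMod n)) ⊆ s := by
    intro x hx; rcases Finset.mem_insert.mp hx with rfl | hx
    · exact hi
    · rw [Finset.mem_singleton.mp hx]; exact hj
  exact (Finset.eq_of_subset_of_card_le hsub (by rw [h2, Finset.card_pair hij])).symm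

lemma pair_repr {q : AnnularLS n} {s : Finset (ZMod n)} (hs : s ∈ q.pairs) {a : ZMod n}
    (ha : a ∈ s) : ∃ c, c ≠ a ∧ s = {a, c} := by
  obtain ⟨x, y, hxy, rfl⟩ := Finset.card_eq_two.mp (q.card_two s hs)
  rcases Finset.mem_insert.mp ha with rfl | ha
  · exact ⟨y, fun h => hxy h.symm, rfl⟩
  · rw [Finset.mem_singleton.mp ha]
    exact ⟨x, fun h => hxy h, Finset.pair_comm x y⟩

lemma pair_eq_cases {i j a c : ZMod n} (h : ({i, j} : Finset (ZMod n)) = {a, c})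
    (hij : i ≠ j) : (i = a ∧ j = c) ∨ (i = c ∧ j = a) := by
  have hi : i ∈ ({a, c} : Finset (ZMod n)) := h ▸ (by simp)
  have hj : j ∈ ({a, c} : Finset (ZMod n)) := h ▸ (by simp)
  simp only [Finset.mem_insert, Finset.mem_singleton] at hi hj
  rcases hi with rfl | rfl <;> rcases hj with rfl | rfl
  · exact absurd rfl hij
  · exact Or.inl ⟨rfl, rfl⟩
  · exact Or.inr ⟨rfl, rfl⟩
  · exact absurd rfl hij

lemma closed_btw {q : AnnularLS n} {s : Finset (ZMod n)} (hs : s ∈ q.pairs) {i j : ZMod n}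
    (hi : i ∈ s) (hj : j ∈ s) (hij : i ≠ j) {t : Finset (ZMod n)} (ht : t ∈ q.pairs)
    {k l : ZMod n} (hk : k ∈ t) (hl : l ∈ t) (h : btw i j k) : btw i j l :=
  cb_iff.mp (q.interval_closed s hs i hi j hj hij t ht k hk l hl (cb_iff.mpr h))

lemma side_btw {q : AnnularLS n} {s : Finset (ZMod n)} (hs : s ∈ q.pairs) {i j : ZMod n}
    (hi : i ∈ s) (hj : j ∈ s) (hij : i ≠ j) :
    (∀ d ∈ q.defects, btw i j d) ∨ (∀ d ∈ q.defects, btw j i d) := by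
  rcases q.defects_one_side s hs i hi j hj hij with h | h
  · exact Or.inl fun d hd => cb_iff.mp (h d (mem_defects.mp hd))
  · exact Or.inr fun d hd => cb_iff.mp (h d (mem_defects.mp hd))

-- ### Rotation

lemma add_one_inj : Function.Injective (fun x : ZMod n => x + 1) :=
  fun a b h => by simpa using h

def rot (q : AnnularLS n) : AnnularLS n where
  pairs := q.pairs.image (fun s => s.image (· + 1))
  card_two := by
    intro s hs
    simp only [Finset.mem_image] at hs
    obtain ⟨t, ht, rfl⟩ := hs
    rw [Finset.card_image_of_injective _ add_one_inj]
    exact q.card_two t ht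
  disj := by
    intro s hs t ht hne
    simp only [Finset.mem_image] at hs ht
    obtain ⟨s0, hs0, rfl⟩ := hs
    obtain ⟨t0, ht0, rfl⟩ := ht
    rw [Finset.disjoint_image add_one_inj]
    exact q.disj s0 hs0 t0 ht0 (fun h => hne (by rw [h]))
  interval_closed := by
    intro s hs i hi j hj hij t ht k hk l hl hbtw
    simp only [Finset.mem_image] at hs ht
    obtain ⟨s0, hs0, rfl⟩ := hs
    obtain ⟨t0, ht0, rfl⟩ := ht
    simp only [Finset.mem_image] at hi hj hk hl
    obtain ⟨i0, hi0, rfl⟩ := hi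
    obtain ⟨j0, hj0, rfl⟩ := hj
    obtain ⟨k0, hk0, rfl⟩ := hk
    obtain ⟨l0, hl0, rfl⟩ := hl
    rw [cb_iff, btw_shift] at hbtw ⊢
    exact closed_btw hs0 hi0 hj0 (fun h => hij (by rw [h])) ht0 hk0 hl0 hbtw
  defects_one_side := by
    intro s hs i hi j hj hij
    simp only [Finset.mem_image] at hs
    obtain ⟨s0, hs0, rfl⟩ := hs
    simp only [Finset.mem_image] at hi hj
    obtain ⟨i0, hi0, rfl⟩ := hi
    obtain ⟨j0, hj0, rfl⟩ := hj
    have key : ∀ d : ZMod n, (∀ t ∈ q.pairs.image (fun s => s.image (· + 1)), d ∉ t) →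
        ∀ u ∈ q.pairs, d - 1 ∉ u := by
      intro d hd u hu hmem
      exact hd _ (Finset.mem_image_of_mem _ hu)
        (Finset.mem_image.mpr ⟨d - 1, hmem, by ring⟩)
    rcases q.defects_one_side s0 hs0 i0 hi0 j0 hj0 (fun h => hij (by rw [h])) with h | h
    · left
      intro d hd
      have := h (d - 1) (key d hd)
      rw [cb_iff] at this ⊢
      have e : d = (d - 1) + 1 := by ring
      rw [e]
      exact btw_shift.mpr this
    · right
      intro d hd
      have := h (d - 1) (key d hd)
      rw [cb_iff] at this ⊢
      have e : d = (d - 1) + 1 := by ring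
      rw [e]
      exact btw_shift.mpr this

lemma rot_pairs (q : AnnularLS n) :
    (rot q).pairs = q.pairs.image (fun s => s.image (· + 1)) := rfl

lemma mem_rot_defects {q : AnnularLS n} {v : ZMod n} :
    v ∈ (rot q).defects ↔ v - 1 ∈ q.defects := by
  simp only [mem_defects, rot_pairs]
  constructor
  · intro h u hu hmem
    exact h _ (Finset.mem_image_of_mem _ hu) (Finset.mem_image.mpr ⟨v - 1, hmem, by ring⟩)
  · intro h u hu hmem
    simp only [Finset.mem_image] at hu
    obtain ⟨u0, hu0, rfl⟩ := hu
    simp only [Finset.mem_image] at hmem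
    obtain ⟨x, hx, hxe⟩ := hmem
    have : x = v - 1 := by
      have : x + 1 = v := hxe
      rw [← this]; ring
    exact h u0 hu0 (this ▸ hx)

lemma defects_congr {q q' : AnnularLS n} (h : q.pairs = q'.pairs) : q.defects = q'.defects := by
  unfold AnnularLS.defects; rw [h]

lemma pairGraph_congr {q p p' : AnnularLS n} (h : p.pairs = p'.pairs) :
    pairGraph n q p = pairGraph n q p' := by
  unfold pairGraph; rw [h]

-- ### Adjacency characterization

lemma pairGraph_adj {q p : AnnularLS n} {i j : ZMod n} :
    (pairGraph n q p).Adj i j ↔ i ≠ j ∧ ({i, j} ∈ q.pairs ∨ {i, j} ∈ p.pairs) := by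
  rw [pairGraph, SimpleGraph.fromRel_adj]
  constructor
  · rintro ⟨hne, h | h⟩
    · obtain ⟨s, hs, hi, hj⟩ := h
      refine ⟨hne, ?_⟩
      rcases Finset.mem_union.mp hs with hq | hpp
      · exact Or.inl (by rw [← pair_eq_of_mem (q.card_two s hq) hi hj hne]; exact hq)
      · exact Or.inr (by rw [← pair_eq_of_mem (p.card_two s hpp) hi hj hne]; exact hpp)
    · obtain ⟨s, hs, hj, hi⟩ := h
      refine ⟨hne, ?_⟩
      rcases Finset.mem_union.mp hs with hq | hpp
      · exact Or.inl (by rw [← pair_eq_of_mem (q.card_two s hq) hi hj hne]; exact hq)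
      · exact Or.inr (by rw [← pair_eq_of_mem (p.card_two s hpp) hi hj hne]; exact hpp)
  · rintro ⟨hne, h⟩
    refine ⟨hne, Or.inl ⟨{i, j}, ?_, by simp, by simp⟩⟩
    rcases h with h | h
    · exact Finset.mem_union_left _ h
    · exact Finset.mem_union_right _ h

lemma pairGraph_mono {q q' p p' : AnnularLS n} (hq : q'.pairs ⊆ q.pairs)
    (hp : p'.pairs ⊆ p.pairs) : pairGraph n q' p' ≤ pairGraph n q p := by
  intro i j hadj
  rw [pairGraph_adj] at hadj ⊢
  exact ⟨hadj.1, hadj.2.imp (fun h => hq h) (fun h => hp h)⟩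

-- ### Generic graph lemmas

lemma reach_isolated {V : Type*} {G : SimpleGraph V} {v : V} (h : ∀ w, ¬ G.Adj v w)
    {u : V} (hr : G.Reachable v u) : v = u := by
  obtain ⟨w⟩ := hr
  cases w with
  | nil => rfl
  | cons h' p => exact absurd h' (h _)

lemma reach_closed {V : Type*} {G : SimpleGraph V} {S : Set V}
    (hCl : ∀ i j, G.Adj i j → i ∈ S → j ∈ S) {i j : V} (hr : G.Reachable i j)
    (hi : i ∈ S) : j ∈ S := by
  obtain ⟨w⟩ := hr
  induction w with
  | nil => exact hi
  | cons h' p ih => exact ih (hCl _ _ h' hi)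

lemma reach_decomp {V : Type*} {G G' : SimpleGraph V} {S : Set V}
    (hSub : ∀ i j, G.Adj i j → G'.Adj i j ∨ (i ∈ S ∧ j ∈ S))
    (hCl : ∀ i j, G'.Adj i j → i ∈ S → j ∈ S)
    {i j : V} (hr : G.Reachable i j) : G'.Reachable i j ∨ (i ∈ S ∧ j ∈ S) := by
  obtain ⟨w⟩ := hr
  induction w with
  | nil => exact Or.inl (SimpleGraph.Reachable.refl _)
  | cons h' p ih =>
    rcases hSub _ _ h' with hA | ⟨h1, h2⟩
    · rcases ih with hr' | ⟨hb, hj⟩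
      · exact Or.inl ((hA.reachable).trans hr')
      · exact Or.inr ⟨hCl _ _ hA.symm hb, hj⟩
    · rcases ih with hr' | ⟨hb, hj⟩
      · exact Or.inr ⟨h1, reach_closed hCl hr' h2⟩
      · exact Or.inr ⟨h1, hj⟩

-- ### Small helpers

lemma two_le_n_of_ne {x y : ZMod n} (h : x ≠ y) : 2 ≤ n := by
  by_contra h'
  have hn : n = 1 := by have := Nat.pos_of_ne_zero (NeZero.ne n); omega
  subst hn
  exact h (Subsingleton.elim x y)

lemma val_one_of (hn : 2 ≤ n) : (1 : ZMod n).val = 1 := by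
  rw [ZMod.val_one_eq_one_mod, Nat.mod_eq_of_lt (by omega)]

lemma btw_succ {x y : ZMod n} (h1 : y ≠ x) (h2 : y ≠ x + 1) : btw x y (x + 1) := by
  have hn := two_le_n_of_ne (Ne.symm h1)
  have e : x + 1 - x = (1 : ZMod n) := by ring
  have hv1 : (x + 1 - x).val = 1 := by rw [e, val_one_of hn]
  have hA : 0 < (y - x).val := sub_val_pos h1
  have hA1 : (y - x).val ≠ 1 := by
    intro h
    apply h2
    have : (y - x).val = (x + 1 - x).val := by rw [hv1, h]
    have := ZMod.val_injective n this
    have h5 : y - x + x = x + 1 - x + x := by rw [this]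
    have : y = x + 1 := by
      have e1 : y - x + x = y := by ring
      have e2 : x + 1 - x + x = x + 1 := by ring
      rw [e1, e2] at h5; exact h5
    exact this
  exact ⟨by omega, by omega⟩

lemma not_btw_succ_right {x y : ZMod n} : ¬ btw x y (y + 1) := by
  rintro ⟨h0, h1⟩
  have hn := two_le_n_of_ne (btw_ends_ne ⟨h0, h1⟩)
  have e : y + 1 - x = (y - x) + 1 := by ring
  rw [e] at h0 h1
  have := val_add_or (y - x) 1
  rw [val_one_of hn] at this
  have b1 := ZMod.val_lt (y - x)
  omega

-- ### `q` and `rot q` share no pair (when there is a defect)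

lemma pairs_disjoint_rot (q : AnnularLS n) (ht : 1 ≤ q.defects.card) :
    Disjoint q.pairs (rot q).pairs := by
  rw [Finset.disjoint_left]
  intro s hsq hsp
  rw [rot_pairs, Finset.mem_image] at hsp
  obtain ⟨u, hu, he⟩ := hsp
  obtain ⟨x, y, hxy, rfl⟩ := Finset.card_eq_two.mp (q.card_two u hu)
  have hn := two_le_n_of_ne hxy
  by_cases hus : ({x, y} : Finset (ZMod n)) = s
  · -- s is its own rotation: forces n = 2, contradicting the defect
    rw [← hus] at he
    have hx1 : x + 1 ∈ ({x, y} : Finset (ZMod n)) := by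
      rw [← he]; exact Finset.mem_image_of_mem _ (by simp)
    have hy1 : y + 1 ∈ ({x, y} : Finset (ZMod n)) := by
      rw [← he]; exact Finset.mem_image_of_mem _ (by simp)
    have h10 : (1 : ZMod n) ≠ 0 := by
      intro h
      have : (1 : ZMod n).val = 1 := val_one_of hn
      rw [h, ZMod.val_zero] at this; omega
    have hx1y : x + 1 = y := by
      rcases Finset.mem_insert.mp hx1 with h | h
      · exact absurd (add_eq_left.mp h) h10
      · exact Finset.mem_singleton.mp h
    have hy1x : y + 1 = x := by
      rcases Finset.mem_insert.mp hy1 with h | h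
      · exact h
      · exact absurd (add_eq_left.mp (Finset.mem_singleton.mp h)) h10
    have h2z : (2 : ZMod n) = 0 := by
      have hx2 : x + 2 = x + 0 := by
        calc x + 2 = x + 1 + 1 := by ring
        _ = y + 1 := by rw [hx1y]
        _ = x + 0 := by rw [hy1x, add_zero]
      exact add_left_cancel hx2
    have hn2 : n = 2 := by
      have hdvd : n ∣ 2 := by
        have h22 : ((2 : ℕ) : ZMod n) = 0 := by push_cast; exact h2z
        exact (ZMod.natCast_eq_zero_iff 2 n).mp h22
      have := Nat.le_of_dvd (by omega) hdvd
      omega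
    obtain ⟨d, hd⟩ := Finset.card_pos.mp ht
    have hdu : d ∉ ({x, y} : Finset (ZMod n)) := mem_defects.mp hd _ hu
    have hcard : ({d, x, y} : Finset (ZMod n)).card = 3 := by
      rw [Finset.card_insert_of_notMem hdu, Finset.card_pair hxy]
    have hle : ({d, x, y} : Finset (ZMod n)).card ≤ n := by
      have h6 := Finset.card_le_univ ({d, x, y} : Finset (ZMod n))
      rwa [ZMod.card] at h6
    omega
  · -- distinct pairs: crossing contradiction
    have hsu : s ≠ ({x, y} : Finset (ZMod n)) := fun h => hus h.symm
    have hdisj := q.disj s hsq _ hu hsu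
    have hx1s : x + 1 ∈ s := by
      rw [← he]; exact Finset.mem_image_of_mem _ (by simp)
    have hy1s : y + 1 ∈ s := by
      rw [← he]; exact Finset.mem_image_of_mem _ (by simp)
    have hx1 : x + 1 ∉ ({x, y} : Finset (ZMod n)) := Finset.disjoint_left.mp hdisj hx1s
    have hy1 : y + 1 ∉ ({x, y} : Finset (ZMod n)) := Finset.disjoint_left.mp hdisj hy1s
    have hbx : btw x y (x + 1) := by
      refine btw_succ (Ne.symm hxy) ?_
      intro h; exact hx1 (by rw [← h]; simp)
    have hby : btw x y (y + 1) :=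
      closed_btw hu (by simp) (by simp) hxy hsq hx1s hy1s hbx
    exact not_btw_succ_right hby

-- ### Erasing a pair

def eraseLS (q : AnnularLS n) (s : Finset (ZMod n)) (hside : ∀ t ∈ q.pairs.erase s, ∀ i ∈ t, ∀ j ∈ t, i ≠ j →
      (∀ d : ZMod n, (∀ u ∈ q.pairs.erase s, d ∉ u) → cyclicBetween n i j d) ∨
      (∀ d : ZMod n, (∀ u ∈ q.pairs.erase s, d ∉ u) → cyclicBetween n j i d)) :
    AnnularLS n where
  pairs := q.pairs.erase s
  card_two := fun t ht => q.card_two t (Finset.erase_subset _ _ ht)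
  disj := fun t ht u hu hne =>
    q.disj t (Finset.erase_subset _ _ ht) u (Finset.erase_subset _ _ hu) hne
  interval_closed := fun t ht i hi j hj hij u hu k hk l hl h =>
    q.interval_closed t (Finset.erase_subset _ _ ht) i hi j hj hij u
      (Finset.erase_subset _ _ hu) k hk l hl h
  defects_one_side := hside

lemma eraseLS_pairs (q : AnnularLS n) (s : Finset (ZMod n)) (hside) :
    (eraseLS q s hside).pairs = q.pairs.erase s := rfl

lemma eraseLS_defects (q : AnnularLS n) {s : Finset (ZMod n)} (hs : s ∈ q.pairs) (hside) :
    (eraseLS q s hside).defects = q.defects ∪ s := by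
  ext i
  rw [mem_defects, Finset.mem_union, eraseLS_pairs]
  constructor
  · intro h
    by_cases his : i ∈ s
    · exact Or.inr his
    · left
      rw [mem_defects]
      intro t ht
      by_cases hts : t = s
      · rw [hts]; exact his
      · exact h t (Finset.mem_erase.mpr ⟨hts, ht⟩)
  · intro h t ht
    obtain ⟨hts, htp⟩ := Finset.mem_erase.mp ht
    rcases h with h | h
    · exact mem_defects.mp h t htp
    · intro hit
      exact hts (pair_mem_unique htp hs hit h)

lemma rot_eraseLS (q : AnnularLS n) (s : Finset (ZMod n)) (hside) :
    (rot (eraseLS q s hside)).pairs = (rot q).pairs.erase (s.image (· + 1)) := by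
  rw [rot_pairs, rot_pairs, eraseLS_pairs]
  exact Finset.image_erase (Finset.image_injective add_one_inj) q.pairs s

-- ### Multiset count for the t = 0 conclusion

lemma filter_mem_card_one {r : AnnularLS n} {i : ZMod n} (h : ∃ s ∈ r.pairs, i ∈ s) :
    Multiset.card (r.pairs.val.filter (fun s => i ∈ s)) = 1 := by
  obtain ⟨s0, hs0, hi⟩ := h
  have hF : r.pairs.filter (fun s => i ∈ s) = {s0} := by
    rw [Finset.eq_singleton_iff_unique_mem]
    exact ⟨Finset.mem_filter.mpr ⟨hs0, hi⟩,
      fun t ht => pair_mem_unique (Finset.mem_filter.mp ht).1 hs0 (Finset.mem_filter.mp ht).2 hi⟩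
  have : r.pairs.val.filter (fun s => i ∈ s) = (r.pairs.filter (fun s => i ∈ s)).val := by
    rw [Finset.filter_val]
  rw [this, hF]
  rfl

lemma point_repr' (k i : ZMod n) : k - ((k - i).val : ZMod n) = i :=
  sub_eq_iff_eq_add.mpr (point_repr k i)

lemma natCast_inj_lt {i j : ℕ} (hi : i < n) (hj : j < n) (h : (i : ZMod n) = (j : ZMod n)) :
    i = j := by
  rw [← ZMod.val_cast_of_lt hi, ← ZMod.val_cast_of_lt hj, h]

-- ### The safe pair

lemma safe_pair (q : AnnularLS n) (ht : 1 ≤ q.defects.card) (hne : q.pairs.Nonempty) :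
    ∃ a c : ZMod n, ({a, c} : Finset (ZMod n)) ∈ q.pairs ∧ a ≠ c ∧
      a + 1 ∈ q.defects ∧
      (∀ v, btw c a v → v ∉ q.defects) ∧
      (∀ δ ∈ q.defects, btw a c δ) ∧
      (∀ t ∈ q.pairs.erase {a, c}, ∀ i ∈ t, ∀ j ∈ t, i ≠ j →
        (∀ d : ZMod n, (∀ u ∈ q.pairs.erase {a, c}, d ∉ u) → cyclicBetween n i j d) ∨
        (∀ d : ZMod n, (∀ u ∈ q.pairs.erase {a, c}, d ∉ u) → cyclicBetween n j i d)) := by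
  classical
  obtain ⟨d, hd⟩ := Finset.card_pos.mp ht
  obtain ⟨s₀, hs₀⟩ := hne
  have hs₀ne : s₀.Nonempty := Finset.card_pos.mp (by rw [q.card_two s₀ hs₀]; omega)
  obtain ⟨x, hx⟩ := hs₀ne
  have hdx : d ≠ x := fun h => mem_defects.mp hd s₀ hs₀ (h ▸ hx)
  have hr₀pos : 0 < (d - x).val := sub_val_pos hdx
  have hex : ∃ m : ℕ, ∃ t ∈ q.pairs, d - ((m + 1 : ℕ) : ZMod n) ∈ t := by
    refine ⟨(d - x).val - 1, s₀, hs₀, ?_⟩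
    rw [show (d - x).val - 1 + 1 = (d - x).val by omega, point_repr']
    exact hx
  set rA : ℕ := Nat.find hex + 1 with hrA_def
  have hrA1 : 1 ≤ rA := by omega
  have hrA_le : rA ≤ (d - x).val := by
    have h1 : Nat.find hex ≤ (d - x).val - 1 := Nat.find_min' hex (by
      refine ⟨s₀, hs₀, ?_⟩
      rw [show (d - x).val - 1 + 1 = (d - x).val by omega, point_repr']
      exact hx)
    omega
  have hrAn : rA < n := lt_of_le_of_lt hrA_le (ZMod.val_lt _)
  set a : ZMod n := d - (rA : ZMod n) with ha_def
  obtain ⟨t₀, ht₀, hat₀⟩ := Nat.find_spec hex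
  have hat₀' : a ∈ t₀ := by
    rw [ha_def, hrA_def]; exact hat₀
  have hmid : ∀ m : ℕ, 1 ≤ m → m < rA → d - (m : ZMod n) ∈ q.defects := by
    intro m h1 h2
    rw [mem_defects]
    intro t htp hmem
    have hPm : ∃ t ∈ q.pairs, d - ((m - 1 + 1 : ℕ) : ZMod n) ∈ t :=
      ⟨t, htp, by rw [show m - 1 + 1 = m by omega]; exact hmem⟩
    exact Nat.find_min hex (by omega : m - 1 < Nat.find hex) hPm
  have hda : d - a = (rA : ZMod n) := by rw [ha_def]; ring
  have hda_val : (d - a).val = rA := by rw [hda, ZMod.val_cast_of_lt hrAn]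
  have hand : a ∉ q.defects := fun h => mem_defects.mp h t₀ ht₀ hat₀'
  have had : a ≠ d := fun h => hand (h ▸ hd)
  -- everything strictly between a and d is a defect
  have f2 : ∀ v, btw a d v → v ∈ q.defects := by
    intro v hb
    obtain ⟨mv, hmv_e, hmv1, hmv2⟩ : ∃ mv : ℕ, v = a + (mv : ZMod n) ∧ 0 < mv ∧ mv < rA := by
      refine ⟨(v - a).val, point_repr v a, hb.1, ?_⟩
      rw [← hda_val]; exact hb.2
    have hcast : ((rA - mv : ℕ) : ZMod n) = (rA : ZMod n) - (mv : ZMod n) :=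
      Nat.cast_sub (le_of_lt hmv2)
    have he : v = d - ((rA - mv : ℕ) : ZMod n) := by
      rw [hcast, hmv_e, ha_def]; ring
    rw [he]
    exact hmid _ (by omega) (by omega)
  have f3 : a + 1 ∈ q.defects := by
    rcases eq_or_lt_of_le hrA1 with h | h
    · have he : a + 1 = d := by
        rw [ha_def, ← h]
        push_cast
        ring
      rw [he]; exact hd
    · have hcast : ((rA - 1 : ℕ) : ZMod n) = (rA : ZMod n) - 1 := by
        rw [Nat.cast_sub (by omega)]
        push_cast
        ring
      have he : a + 1 = d - ((rA - 1 : ℕ) : ZMod n) := by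
        rw [hcast, ha_def]; ring
      rw [he]
      exact hmid (rA - 1) (by omega) (by omega)
  obtain ⟨c, hca, hts⟩ := pair_repr ht₀ hat₀'
  have hpair : ({a, c} : Finset (ZMod n)) ∈ q.pairs := hts ▸ ht₀
  have hcnd : c ∉ q.defects := fun h => mem_defects.mp h _ hpair (by simp)
  have hcd : c ≠ d := fun h => hcnd (h ▸ hd)
  have hcad : ¬ btw a d c := fun h => hcnd (f2 c h)
  have f8 : btw d a c := by
    rcases btw_total had hca hcd with h | h
    · exact absurd h hcad
    · exact h
  -- all defects lie in (a, c)
  have f9 : ∀ δ ∈ q.defects, btw a c δ := by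
    rcases side_btw hpair (Finset.mem_insert_self a _)
      (by simp : c ∈ ({a, c} : Finset (ZMod n))) (Ne.symm hca) with h | h
    · exact h
    · exfalso
      have hbd : btw c a d := h d hd
      exact (btw_ne_left (btw_nested f8 hbd)) rfl
  have f10 : ∀ v, btw c a v → v ∉ q.defects := by
    intro v hv hvd
    exact btw_asymm (f9 v hvd) hv
  refine ⟨a, c, hpair, Ne.symm hca, f3, f10, f9, ?_⟩
  -- safety of erasing {a, c}
  intro t htm i hi j hj hij
  obtain ⟨htne, htp⟩ := Finset.mem_erase.mp htm
  have hdisj : Disjoint ({a, c} : Finset (ZMod n)) t :=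
    q.disj _ hpair t htp (Ne.symm htne)
  have hant : a ∉ t := Finset.disjoint_left.mp hdisj (by simp)
  have hcnt : c ∉ t := Finset.disjoint_left.mp hdisj (by simp)
  have key : ∀ x' y' : ZMod n, x' ∈ t → y' ∈ t → x' ≠ y' →
      (∀ δ ∈ q.defects, btw x' y' δ) →
      ∀ d' : ZMod n, (∀ u ∈ q.pairs.erase {a, c}, d' ∉ u) → cyclicBetween n x' y' d' := by
    intro x' y' hx' hy' hxy' hall d' hd'
    rw [cb_iff]
    by_cases hd'q : d' ∈ q.defects
    · exact hall d' hd'q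
    · have hmem : ∃ u ∈ q.pairs, d' ∈ u := by
        by_contra hcon
        push_neg at hcon
        exact hd'q (mem_defects.mpr hcon)
      obtain ⟨u, hu, hd'u⟩ := hmem
      have hus : u = ({a, c} : Finset (ZMod n)) := by
        by_contra h'
        exact hd' u (Finset.mem_erase.mpr ⟨h', hu⟩) hd'u
      have hxnd : x' ∉ q.defects := fun h => mem_defects.mp h t htp hx'
      have hax' : a ≠ x' := fun h => hant (h ▸ hx')
      have hay' : a ≠ y' := fun h => hant (h ▸ hy')
      have hbtwa : btw x' y' a := by
        rcases btw_total hxy' hax' hay' with h | h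
        · exact h
        · exfalso
          have hwd : btw y' x' a := by
            have : btw x' y' a ∨ btw y' x' a := Or.inr h
            exact h
          have hbx : btw a d x' := btw_walk hwd (hall d hd)
          exact hxnd (f2 x' hbx)
      have hbtwc : btw x' y' c :=
        closed_btw htp hx' hy' hxy' hpair (Finset.mem_insert_self a _)
          (by simp) hbtwa
      rw [hus] at hd'u
      rcases Finset.mem_insert.mp hd'u with rfl | h
      · exact hbtwa
      · rw [Finset.mem_singleton.mp h]
        exact hbtwc
  rcases side_btw htp hi hj hij with h | h
  · exact Or.inl (key i j hi hj hij h)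
  · exact Or.inr (key j i hj hi (Ne.symm hij) h)

-- ### The master induction

lemma master : ∀ N : ℕ, ∀ q : AnnularLS n, q.pairs.card = N →
    (1 ≤ q.defects.card →
      (pairGraph n q (rot q)).IsAcyclic ∧
      (∀ i : ZMod n, ∃! d : ZMod n, d ∈ q.defects ∧ (pairGraph n q (rot q)).Reachable i d) ∧
      (∀ i : ZMod n, ∃! d : ZMod n, d ∈ (rot q).defects ∧
        (pairGraph n q (rot q)).Reachable i d) ∧
      (∀ w ∈ q.defects, ∀ k : ℕ, 1 ≤ k → w + (k : ZMod n) ∈ q.defects →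
        (∀ j : ℕ, 0 < j → j < k → w + (j : ZMod n) ∉ q.defects) →
        (pairGraph n q (rot q)).Reachable (w + 1) (w + (k : ZMod n)))) ∧
    (q.defects.card = 0 → ∀ i j : ZMod n, (pairGraph n q (rot q)).Reachable i j) := by
  intro N
  induction N with
  | zero =>
    intro q hcard
    have hq0 : q.pairs = ∅ := Finset.card_eq_zero.mp hcard
    have hrot0 : (rot q).pairs = ∅ := by rw [rot_pairs, hq0]; simp
    have hnoadj : ∀ i j : ZMod n, ¬ (pairGraph n q (rot q)).Adj i j := by
      intro i j h
      rcases (pairGraph_adj.mp h).2 with h' | h' <;> simp [hq0, hrot0] at h'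
    have hreach : ∀ i j : ZMod n, (pairGraph n q (rot q)).Reachable i j → i = j :=
      fun i j h => reach_isolated (hnoadj i) h
    have halldef : ∀ i : ZMod n, i ∈ q.defects := fun i => mem_defects.mpr (by simp [hq0])
    constructor
    · intro _
      refine ⟨?_, ?_, ?_, ?_⟩
      · intro v C hC
        cases C with
        | nil => exact hC.ne_nil rfl
        | cons h' p => exact hnoadj _ _ h'
      · intro i
        exact ⟨i, ⟨halldef i, SimpleGraph.Reachable.refl i⟩, fun y hy => (hreach i y hy.2).symm⟩
      · intro i
        exact ⟨i, ⟨mem_rot_defects.mpr (halldef _), SimpleGraph.Reachable.refl i⟩,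
          fun y hy => (hreach i y hy.2).symm⟩
      · intro w hw k hk1 hkD hmidk
        rcases eq_or_lt_of_le hk1 with h | h
        · rw [← h]
          rw [Nat.cast_one]
        · exact absurd (halldef (w + ((1 : ℕ) : ZMod n))) (hmidk 1 one_pos h)
    · intro h0
      exfalso
      have hu : q.defects = Finset.univ := Finset.eq_univ_iff_forall.mpr halldef
      rw [hu, Finset.card_univ, ZMod.card] at h0
      exact absurd h0 (NeZero.ne n)
  | succ N ih =>
    intro q hcard
    have hpne : q.pairs.Nonempty := Finset.card_pos.mp (by omega)
    constructor
    · intro ht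
      obtain ⟨a, c, hac_pair, hac, ha1, hfree, hside0, hsafety⟩ := safe_pair q ht hpne
      have hn2 : 2 ≤ n := two_le_n_of_ne hac
      set G := pairGraph n q (rot q) with hG_def
      set q' := eraseLS q {a, c} hsafety with hq'_def
      set G' := pairGraph n q' (rot q') with hG'_def
      have hq'pairs : q'.pairs = q.pairs.erase {a, c} := rfl
      have hrot'pairs : (rot q').pairs =
          (rot q).pairs.erase (Finset.image (· + 1) {a, c}) := by
        rw [hq'_def]; exact rot_eraseLS q {a, c} hsafety
      have hq'card : q'.pairs.card = N := by
        rw [hq'pairs, Finset.card_erase_of_mem hac_pair, hcard]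
        omega
      have hdef' : q'.defects = q.defects ∪ {a, c} := by
        rw [hq'_def]; exact eraseLS_defects q hac_pair hsafety
      have hqsub : q.defects ⊆ q'.defects := by
        rw [hdef']; exact Finset.subset_union_left
      have ht' : 1 ≤ q'.defects.card := by
        obtain ⟨d₀, hd₀⟩ := Finset.card_pos.mp ht
        exact Finset.card_pos.mpr ⟨d₀, hqsub hd₀⟩
      obtain ⟨hAc', hQ', hP', hStar'⟩ := (ih q' hq'card).1 ht'
      have ha_nd : a ∉ q.defects := fun h => mem_defects.mp h _ hac_pair (by simp)
      have hc_nd : c ∉ q.defects := fun h => mem_defects.mp h _ hac_pair (by simp)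
      have haD' : a ∈ q'.defects := by rw [hdef']; simp
      have hcD' : c ∈ q'.defects := by rw [hdef']; simp
      have ha1D' : a + 1 ∈ q'.defects := hqsub ha1
      have hsucc : ∀ x : ZMod n, x + 1 ≠ x := by
        intro x h
        have h10 : (1 : ZMod n).val = 1 := val_one_of hn2
        have h2 := add_eq_left.mp h
        rw [h2, ZMod.val_zero] at h10
        omega
      have ha1a : a + 1 ≠ a := hsucc a
      have ha1c : a + 1 ≠ c := fun h => hc_nd (h ▸ ha1)
      have ha1c1 : a + 1 ≠ c + 1 := fun h => hac (by simpa using h)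
      have himg : Finset.image (· + 1) ({a, c} : Finset (ZMod n)) = {a + 1, c + 1} := by
        simp [Finset.image_insert]
      have hepair : ({a + 1, c + 1} : Finset (ZMod n)) ∈ (rot q).pairs := by
        rw [rot_pairs]
        exact himg ▸ Finset.mem_image_of_mem _ hac_pair
      -- decomposition of adjacency
      have hGadj : ∀ i j : ZMod n, G.Adj i j ↔ (G'.Adj i j ∨
          ((i = a ∧ j = c) ∨ (i = c ∧ j = a) ∨ (i = a + 1 ∧ j = c + 1) ∨
           (i = c + 1 ∧ j = a + 1))) := by
        intro i j
        rw [hG_def, hG'_def, pairGraph_adj, pairGraph_adj]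
        constructor
        · rintro ⟨hij, h | h⟩
          · by_cases hsq : ({i, j} : Finset (ZMod n)) = {a, c}
            · rcases pair_eq_cases hsq hij with ⟨rfl, rfl⟩ | ⟨rfl, rfl⟩
              · exact Or.inr (Or.inl ⟨rfl, rfl⟩)
              · exact Or.inr (Or.inr (Or.inl ⟨rfl, rfl⟩))
            · exact Or.inl ⟨hij, Or.inl (by
                rw [hq'pairs]; exact Finset.mem_erase.mpr ⟨hsq, h⟩)⟩
          · by_cases hsq : ({i, j} : Finset (ZMod n)) = {a + 1, c + 1}
            · rcases pair_eq_cases hsq hij with ⟨rfl, rfl⟩ | ⟨rfl, rfl⟩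
              · exact Or.inr (Or.inr (Or.inr (Or.inl ⟨rfl, rfl⟩)))
              · exact Or.inr (Or.inr (Or.inr (Or.inr ⟨rfl, rfl⟩)))
            · refine Or.inl ⟨hij, Or.inr ?_⟩
              rw [hrot'pairs]
              exact Finset.mem_erase.mpr ⟨by rw [himg]; exact hsq, h⟩
        · rintro (⟨hij, h | h⟩ | h)
          · refine ⟨hij, Or.inl ?_⟩
            rw [hq'pairs] at h
            exact Finset.erase_subset _ _ h
          · refine ⟨hij, Or.inr ?_⟩
            rw [hrot'pairs] at h
            exact Finset.erase_subset _ _ h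
          · rcases h with ⟨rfl, rfl⟩ | ⟨rfl, rfl⟩ | ⟨rfl, rfl⟩ | ⟨rfl, rfl⟩
            · exact ⟨hac, Or.inl hac_pair⟩
            · exact ⟨fun h => hac h.symm, Or.inl (by rw [Finset.pair_comm]; exact hac_pair)⟩
            · exact ⟨ha1c1, Or.inr hepair⟩
            · exact ⟨fun h => ha1c1 h.symm, Or.inr (by rw [Finset.pair_comm]; exact hepair)⟩
      -- a+1 is isolated in G'
      have hIso : ∀ w : ZMod n, ¬ G'.Adj (a + 1) w := by
        intro w hadj
        rw [hG'_def, pairGraph_adj] at hadj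
        obtain ⟨hne, h | h⟩ := hadj
        · rw [hq'pairs] at h
          exact mem_defects.mp ha1 _ (Finset.erase_subset _ _ h) (by simp)
        · rw [hrot'pairs] at h
          have h2 := Finset.erase_subset _ _ h
          rw [rot_pairs] at h2
          obtain ⟨u₀, hu₀, himg2⟩ := Finset.mem_image.mp h2
          have hmem : a + 1 ∈ Finset.image (· + 1) u₀ := by rw [himg2]; simp
          obtain ⟨z, hz, hze⟩ := Finset.mem_image.mp hmem
          have hza : z = a := by
            have hz1 : z + 1 = a + 1 := hze
            simpa using hz1
          have hu₀eq : u₀ = {a, c} := pair_mem_unique hu₀ hac_pair (hza ▸ hz) (by simp)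
          rw [Finset.mem_erase] at h
          exact h.1 (by rw [← himg2, hu₀eq])
      have hreach_iso : ∀ v, G'.Reachable (a + 1) v → v = a + 1 :=
        fun v h => (reach_isolated hIso h).symm
      -- the crucial geometric connection  c+1 ⇝ a  in G'
      have hk₀pos : 0 < (a - c).val := sub_val_pos hac
      have hck₀ : c + (((a - c).val : ℕ) : ZMod n) = a := (point_repr a c).symm
      have hc1a : G'.Reachable (c + 1) a := by
        have hmids : ∀ j : ℕ, 0 < j → j < (a - c).val → c + (j : ZMod n) ∉ q'.defects := by
          intro j hj0 hjk hmem
          have hbtw : btw c a (c + (j : ZMod n)) := btw_add hj0 hjk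
          rw [hdef'] at hmem
          rcases Finset.mem_union.mp hmem with h | h
          · exact hfree _ hbtw h
          · rcases Finset.mem_insert.mp h with h | h
            · exact btw_ne_right hbtw h
            · exact btw_ne_left hbtw (Finset.mem_singleton.mp h)
        have hh := hStar' c hcD' (a - c).val hk₀pos (by rw [hck₀]; exact haD') hmids
        rwa [hck₀] at hh
      -- edges of G
      have hadj_eq : G.Adj c a :=
        (hGadj c a).mpr (Or.inr (Or.inr (Or.inl ⟨rfl, rfl⟩)))
      have hadj_ep : G.Adj (c + 1) (a + 1) :=
        (hGadj _ _).mpr (Or.inr (Or.inr (Or.inr (Or.inr ⟨rfl, rfl⟩))))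
      have hle : G' ≤ G := by
        intro i j h
        exact (hGadj i j).mpr (Or.inl h)
      have ha_to_a1 : G.Reachable a (a + 1) :=
        ((hc1a.mono hle).symm).trans hadj_ep.reachable
      have hnotac : ¬ G'.Reachable a c := by
        intro hr
        obtain ⟨d₀, _, huniq⟩ := hQ' a
        have h1 := huniq a ⟨haD', SimpleGraph.Reachable.refl a⟩
        have h2 := huniq c ⟨hcD', hr⟩
        exact hac (h1.trans h2.symm)
      -- the merged-component predicate
      have haS : G'.Reachable a a ∨ G'.Reachable a c ∨ a = a + 1 :=
        Or.inl (SimpleGraph.Reachable.refl a)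
      have hcS : G'.Reachable c a ∨ G'.Reachable c c ∨ c = a + 1 :=
        Or.inr (Or.inl (SimpleGraph.Reachable.refl c))
      have hc1S : G'.Reachable (c + 1) a ∨ G'.Reachable (c + 1) c ∨ c + 1 = a + 1 :=
        Or.inl hc1a
      have ha1S : G'.Reachable (a + 1) a ∨ G'.Reachable (a + 1) c ∨ a + 1 = a + 1 :=
        Or.inr (Or.inr rfl)
      have hSclosed : ∀ i j, G'.Adj i j →
          (G'.Reachable i a ∨ G'.Reachable i c ∨ i = a + 1) →
          (G'.Reachable j a ∨ G'.Reachable j c ∨ j = a + 1) := by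
        intro i j hadj hi
        rcases hi with h | h | h
        · exact Or.inl (hadj.symm.reachable.trans h)
        · exact Or.inr (Or.inl (hadj.symm.reachable.trans h))
        · rw [h] at hadj
          exact absurd hadj (hIso j)
      have hdecomp : ∀ i j, G.Reachable i j → (G'.Reachable i j ∨
          ((G'.Reachable i a ∨ G'.Reachable i c ∨ i = a + 1) ∧
           (G'.Reachable j a ∨ G'.Reachable j c ∨ j = a + 1))) := by
        intro i j h
        refine reach_decomp (S := {v | G'.Reachable v a ∨ G'.Reachable v c ∨ v = a + 1})
          ?_ ?_ h
        · intro i' j' hadj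
          rcases (hGadj i' j').mp hadj with h' | h'
          · exact Or.inl h'
          · right
            rcases h' with ⟨rfl, rfl⟩ | ⟨rfl, rfl⟩ | ⟨rfl, rfl⟩ | ⟨rfl, rfl⟩
            · exact ⟨haS, hcS⟩
            · exact ⟨hcS, haS⟩
            · exact ⟨ha1S, hc1S⟩
            · exact ⟨hc1S, ha1S⟩
        · exact hSclosed
      -- uniqueness of the q-defect in each component
      have hSdef : ∀ d', d' ∈ q.defects →
          (G'.Reachable d' a ∨ G'.Reachable d' c ∨ d' = a + 1) → d' = a + 1 := by
        intro d' hd' hS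
        rcases hS with h | h | h
        · exfalso
          obtain ⟨d₀, _, huniq⟩ := hQ' d'
          have h1 := huniq d' ⟨hqsub hd', SimpleGraph.Reachable.refl d'⟩
          have h2 := huniq a ⟨haD', h⟩
          exact ha_nd ((h2.trans h1.symm) ▸ hd')
        · exfalso
          obtain ⟨d₀, _, huniq⟩ := hQ' d'
          have h1 := huniq d' ⟨hqsub hd', SimpleGraph.Reachable.refl d'⟩
          have h2 := huniq c ⟨hcD', h⟩
          exact hc_nd ((h2.trans h1.symm) ▸ hd')
        · exact h
      have hq_claim : ∀ d₁ d₂ : ZMod n, d₁ ∈ q.defects → d₂ ∈ q.defects →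
          G.Reachable d₁ d₂ → d₁ = d₂ := by
        intro d₁ d₂ h1 h2 hr
        rcases hdecomp _ _ hr with h | ⟨hS1, hS2⟩
        · obtain ⟨d₀, _, huniq⟩ := hQ' d₁
          exact (huniq d₁ ⟨hqsub h1, SimpleGraph.Reachable.refl d₁⟩).trans
            (huniq d₂ ⟨hqsub h2, h⟩).symm
        · rw [hSdef d₁ h1 hS1, hSdef d₂ h2 hS2]
      have hQ : ∀ i : ZMod n, ∃! d : ZMod n, d ∈ q.defects ∧ G.Reachable i d := by
        intro i
        obtain ⟨d₀, ⟨hd₀D, hd₀r⟩, _⟩ := hQ' i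
        have hex2 : ∃ d, d ∈ q.defects ∧ G.Reachable i d := by
          rw [hdef'] at hd₀D
          rcases Finset.mem_union.mp hd₀D with h | h
          · exact ⟨d₀, h, hd₀r.mono hle⟩
          · rcases Finset.mem_insert.mp h with h | h
            · rw [h] at hd₀r
              exact ⟨a + 1, ha1, (hd₀r.mono hle).trans ha_to_a1⟩
            · rw [Finset.mem_singleton.mp h] at hd₀r
              exact ⟨a + 1, ha1,
                ((hd₀r.mono hle).trans hadj_eq.reachable).trans ha_to_a1⟩
        obtain ⟨d, hdD, hdr⟩ := hex2
        exact ⟨d, ⟨hdD, hdr⟩, fun y hy => hq_claim y d hy.1 hdD (hy.2.symm.trans hdr)⟩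
      -- the p-side
      have hrotdef : ∀ v : ZMod n, v ∈ (rot q').defects ↔
          (v ∈ (rot q).defects ∨ v = a + 1 ∨ v = c + 1) := by
        intro v
        rw [mem_rot_defects, mem_rot_defects, hdef']
        constructor
        · intro h
          rcases Finset.mem_union.mp h with h | h
          · exact Or.inl h
          · rcases Finset.mem_insert.mp h with h | h
            · refine Or.inr (Or.inl ?_)
              rw [← h]; ring
            · refine Or.inr (Or.inr ?_)
              rw [← Finset.mem_singleton.mp h]; ring
        · intro h
          rcases h with h | rfl | rfl
          · exact Finset.mem_union_left _ h
          · apply Finset.mem_union_right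
            have he : a + 1 - 1 = a := by ring
            rw [he]; simp
          · apply Finset.mem_union_right
            have he : c + 1 - 1 = c := by ring
            rw [he]; simp
      have ha1notp : a + 1 ∉ (rot q).defects := by
        rw [mem_rot_defects]
        intro h
        have he : a + 1 - 1 = a := by ring
        rw [he] at h
        exact ha_nd h
      have hc1notp : c + 1 ∉ (rot q).defects := by
        rw [mem_rot_defects]
        intro h
        have he : c + 1 - 1 = c := by ring
        rw [he] at h
        exact hc_nd h
      have ha1D'' : a + 1 ∈ (rot q').defects := (hrotdef _).mpr (Or.inr (Or.inl rfl))
      have hc1D'' : c + 1 ∈ (rot q').defects := (hrotdef _).mpr (Or.inr (Or.inr rfl))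
      obtain ⟨zc, ⟨hzcD, hzcr⟩, hzcu⟩ := hP' c
      have hzc_genuine : zc ∈ (rot q).defects := by
        rcases (hrotdef zc).mp hzcD with h | h | h
        · exact h
        · exfalso
          rw [h] at hzcr
          exact ha1c (hreach_iso c hzcr.symm).symm
        · exfalso
          rw [h] at hzcr
          exact hnotac ((hzcr.trans hc1a).symm)
      have hSdefp : ∀ d', d' ∈ (rot q).defects →
          (G'.Reachable d' a ∨ G'.Reachable d' c ∨ d' = a + 1) → d' = zc := by
        intro d' hd' hS
        have hd'D' : d' ∈ (rot q').defects := (hrotdef _).mpr (Or.inl hd')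
        rcases hS with h | h | h
        · exfalso
          obtain ⟨e₀, _, hu⟩ := hP' a
          have h1 := hu d' ⟨hd'D', h.symm⟩
          have h2 := hu (c + 1) ⟨hc1D'', hc1a.symm⟩
          exact hc1notp ((h1.trans h2.symm).symm ▸ hd')
        · exact hzcu d' ⟨hd'D', h.symm⟩
        · exfalso
          rw [h] at hd'
          exact ha1notp hd'
      have hp_claim : ∀ d₁ d₂ : ZMod n, d₁ ∈ (rot q).defects → d₂ ∈ (rot q).defects →
          G.Reachable d₁ d₂ → d₁ = d₂ := by
        intro d₁ d₂ h1 h2 hr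
        rcases hdecomp _ _ hr with h | ⟨hS1, hS2⟩
        · obtain ⟨e₀, _, hu⟩ := hP' d₁
          exact (hu d₁ ⟨(hrotdef _).mpr (Or.inl h1), SimpleGraph.Reachable.refl d₁⟩).trans
            (hu d₂ ⟨(hrotdef _).mpr (Or.inl h2), h⟩).symm
        · rw [hSdefp d₁ h1 hS1, hSdefp d₂ h2 hS2]
      have hP : ∀ i : ZMod n, ∃! d : ZMod n, d ∈ (rot q).defects ∧ G.Reachable i d := by
        intro i
        obtain ⟨d₀, ⟨hd₀D, hd₀r⟩, _⟩ := hP' i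
        have hczc : G.Reachable c zc := hzcr.mono hle
        have hc1zc : G.Reachable (c + 1) zc :=
          ((hc1a.mono hle).trans hadj_eq.symm.reachable).trans hczc
        have hex2 : ∃ d, d ∈ (rot q).defects ∧ G.Reachable i d := by
          rcases (hrotdef d₀).mp hd₀D with h | h | h
          · exact ⟨d₀, h, hd₀r.mono hle⟩
          · rw [h] at hd₀r
            have hi : i = a + 1 := hreach_iso i hd₀r.symm
            rw [hi]
            exact ⟨zc, hzc_genuine, hadj_ep.symm.reachable.trans hc1zc⟩
          · rw [h] at hd₀r
            exact ⟨zc, hzc_genuine, (hd₀r.mono hle).trans hc1zc⟩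
        obtain ⟨d, hdD, hdr⟩ := hex2
        exact ⟨d, ⟨hdD, hdr⟩, fun y hy => hp_claim y d hy.1 hdD (hy.2.symm.trans hdr)⟩
      -- acyclicity
      have hbridge_p : G.IsBridge s(c + 1, a + 1) := by
        rw [SimpleGraph.isBridge_iff]
        intro hr
        have hiso2 : ∀ w, ¬ (G \ SimpleGraph.fromEdgeSet {s(c + 1, a + 1)}).Adj (a + 1) w := by
          intro w hadj
          rw [SimpleGraph.sdiff_adj, SimpleGraph.fromEdgeSet_adj] at hadj
          obtain ⟨hGa, hnot⟩ := hadj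
          rcases (hGadj _ _).mp hGa with h | h
          · exact hIso w h
          · rcases h with ⟨h1, _⟩ | ⟨h1, _⟩ | ⟨h1, rfl⟩ | ⟨h1, _⟩
            · exact ha1a h1
            · exact ha1c h1
            · exact hnot ⟨by rw [Sym2.eq_swap]; exact Set.mem_singleton _, ha1c1⟩
            · exact ha1c1 h1
        have hf := reach_isolated hiso2 hr.symm
        exact ha1c1 hf
      have hbridge_q : G.IsBridge s(c, a) := by
        rw [SimpleGraph.isBridge_iff]
        intro hr
        have hS2closed : ∀ i j, G'.Adj i j →
            (G'.Reachable i (c + 1) ∨ i = a + 1) →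
            (G'.Reachable j (c + 1) ∨ j = a + 1) := by
          intro i j hadj hi
          rcases hi with h | h
          · exact Or.inl (hadj.symm.reachable.trans h)
          · rw [h] at hadj
            exact absurd hadj (hIso j)
        have hsub2 : ∀ i j, (G \ SimpleGraph.fromEdgeSet {s(c, a)}).Adj i j →
            G'.Adj i j ∨ ((G'.Reachable i (c + 1) ∨ i = a + 1) ∧
              (G'.Reachable j (c + 1) ∨ j = a + 1)) := by
          intro i j hadj
          rw [SimpleGraph.sdiff_adj, SimpleGraph.fromEdgeSet_adj] at hadj
          obtain ⟨hGa, hnot⟩ := hadj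
          rcases (hGadj _ _).mp hGa with h | h
          · exact Or.inl h
          · rcases h with ⟨rfl, rfl⟩ | ⟨rfl, rfl⟩ | ⟨rfl, rfl⟩ | ⟨rfl, rfl⟩
            · exact absurd ⟨by rw [Sym2.eq_swap]; exact Set.mem_singleton _, hac⟩ hnot
            · exact absurd ⟨Set.mem_singleton _, fun h => hac h.symm⟩ hnot
            · exact Or.inr ⟨Or.inr rfl, Or.inl (SimpleGraph.Reachable.refl _)⟩
            · exact Or.inr ⟨Or.inl (SimpleGraph.Reachable.refl _), Or.inr rfl⟩
        rcases reach_decomp (S := {v | G'.Reachable v (c + 1) ∨ v = a + 1})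
            hsub2 hS2closed hr with h | ⟨h1, h2⟩
        · exact hnotac h.symm
        · rcases h1 with h | h
          · exact hnotac (h.trans hc1a).symm
          · exact ha1c h.symm
      have hAc : G.IsAcyclic := by
        intro v C hC
        have hep : s(c + 1, a + 1) ∉ C.edges :=
          hbridge_p.notMem_edges_of_isCycle hC
        have heq2 : s(c, a) ∉ C.edges :=
          hbridge_q.notMem_edges_of_isCycle hC
        have hsub : ∀ e ∈ C.edges, e ∈ G'.edgeSet := by
          intro e he
          revert he
          refine Sym2.ind (fun u w => ?_) e
          intro he
          have hadj : G.Adj u w := C.adj_of_mem_edges he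
          rcases (hGadj _ _).mp hadj with h | h
          · exact h
          · exfalso
            rcases h with ⟨rfl, rfl⟩ | ⟨rfl, rfl⟩ | ⟨rfl, rfl⟩ | ⟨rfl, rfl⟩
            · exact heq2 (by rwa [Sym2.eq_swap] at he)
            · exact heq2 he
            · exact hep (by rwa [Sym2.eq_swap] at he)
            · exact hep he
        exact hAc' (C.transfer G' hsub) (hC.transfer hsub)
      -- the consecutive-defect property
      have hStar : ∀ w ∈ q.defects, ∀ k : ℕ, 1 ≤ k → w + (k : ZMod n) ∈ q.defects →
          (∀ j : ℕ, 0 < j → j < k → w + (j : ZMod n) ∉ q.defects) →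
          G.Reachable (w + 1) (w + (k : ZMod n)) := by
        intro w hw k hk1 hkD hmidk
        have hkn : k ≤ n := by
          by_contra hgt
          push_neg at hgt
          have hnpos := Nat.pos_of_ne_zero (NeZero.ne n)
          have he : w + ((k - n : ℕ) : ZMod n) = w + (k : ZMod n) := by
            rw [Nat.cast_sub (by omega), ZMod.natCast_self]
            ring
          exact hmidk (k - n) (by omega) (by omega) (he ▸ hkD)
        by_cases hja : ∃ j : ℕ, 0 < j ∧ j < k ∧ w + (j : ZMod n) = a
        · obtain ⟨j₀, hj₀0, hj₀k, hj₀a⟩ := hja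
          have hj₀n : j₀ < n := by omega
          have hk_eq : k = j₀ + 1 := by
            rcases Nat.lt_or_ge (j₀ + 1) k with h | h
            · exfalso
              refine hmidk (j₀ + 1) (by omega) h ?_
              have he : w + ((j₀ + 1 : ℕ) : ZMod n) = a + 1 := by
                rw [← hj₀a]; push_cast; ring
              rw [he]; exact ha1
            · omega
          have hbw : btw w a c := btw_rotate (hside0 w hw)
          have hwa_val : (a - w).val = j₀ := by
            rw [← hj₀a]
            have he2 : w + (j₀ : ZMod n) - w = (j₀ : ZMod n) := by ring
            rw [he2, ZMod.val_cast_of_lt hj₀n]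
          have hm_pos : 0 < (c - w).val := hbw.1
          have hm_lt : (c - w).val < j₀ := by rw [← hwa_val]; exact hbw.2
          have hc_eq : w + (((c - w).val : ℕ) : ZMod n) = c := (point_repr c w).symm
          have h1 : G'.Reachable (w + 1) c := by
            have hmids : ∀ j : ℕ, 0 < j → j < (c - w).val →
                w + (j : ZMod n) ∉ q'.defects := by
              intro j hj0 hjlt hmem
              rw [hdef'] at hmem
              rcases Finset.mem_union.mp hmem with h | h
              · exact hmidk j hj0 (by omega) h
              · rcases Finset.mem_insert.mp h with h | h
                · have hje : j = j₀ := by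
                    refine natCast_inj_lt (by omega) hj₀n ?_
                    have h2 : w + (j : ZMod n) = w + (j₀ : ZMod n) := by rw [h, hj₀a]
                    exact add_left_cancel h2
                  omega
                · have hcj : w + (j : ZMod n) = c := Finset.mem_singleton.mp h
                  have hje : j = (c - w).val := by
                    refine natCast_inj_lt (by omega) (ZMod.val_lt _) ?_
                    have h2 : w + (j : ZMod n) = w + (((c - w).val : ℕ) : ZMod n) := by
                      rw [hcj, hc_eq]
                    exact add_left_cancel h2
                  omega
            have hh := hStar' w (hqsub hw) (c - w).val hm_pos
              (by rw [hc_eq]; exact hcD') hmids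
            rwa [hc_eq] at hh
          have hgoal_eq : w + (k : ZMod n) = a + 1 := by
            rw [hk_eq, ← hj₀a]; push_cast; ring
          rw [hgoal_eq]
          exact ((h1.mono hle).trans hadj_eq.reachable).trans ha_to_a1
        · push_neg at hja
          have hmids : ∀ j : ℕ, 0 < j → j < k → w + (j : ZMod n) ∉ q'.defects := by
            intro j hj0 hjlt hmem
            rw [hdef'] at hmem
            rcases Finset.mem_union.mp hmem with h | h
            · exact hmidk j hj0 hjlt h
            · rcases Finset.mem_insert.mp h with h | h
              · exact hja j hj0 hjlt h
              · have hcj : w + (j : ZMod n) = c := Finset.mem_singleton.mp h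
                have hjn : j < n := by omega
                have hbw : btw w a c := btw_rotate (hside0 w hw)
                have hj_val : (c - w).val = j := by
                  rw [← hcj]
                  have he2 : w + (j : ZMod n) - w = (j : ZMod n) := by ring
                  rw [he2, ZMod.val_cast_of_lt hjn]
                have hjA : j < (a - w).val := by rw [← hj_val]; exact hbw.2
                have hAn : (a - w).val < n := ZMod.val_lt _
                have haw : w + (((a - w).val : ℕ) : ZMod n) = a := (point_repr a w).symm
                have hA_not_lt : ¬ (a - w).val < k := by
                  intro h'
                  exact hja (a - w).val (by omega) h' haw
                have hAk' : (a - w).val ≠ k := by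
                  intro h'
                  refine ha_nd ?_
                  rw [← haw, h']
                  exact hkD
                have hAgt : k < (a - w).val := by omega
                have he3 : w + (k : ZMod n) - c = ((k - j : ℕ) : ZMod n) := by
                  rw [← hcj, Nat.cast_sub (le_of_lt hjlt)]
                  ring
                have he4 : (a - c).val = (a - w).val - j := by
                  have e1 := zsub_val3 w a c
                  rw [hj_val] at e1
                  have b := ZMod.val_lt (a - c)
                  omega
                have hx_btw : btw c a (w + (k : ZMod n)) := by
                  constructor
                  · rw [he3, ZMod.val_cast_of_lt (by omega)]
                    omega
                  · rw [he3, he4, ZMod.val_cast_of_lt (by omega)]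
                    omega
                exact hfree _ hx_btw hkD
          have hh := hStar' w (hqsub hw) k hk1 (hqsub hkD) hmids
          exact hh.mono hle
      exact ⟨hAc, hQ, hP, hStar⟩
    · -- t = 0 : the graph is connected
      intro h0
      obtain ⟨s, hs⟩ := hpne
      have hdef0 : q.defects = ∅ := Finset.card_eq_zero.mp h0
      obtain ⟨α, β, hab, hsab⟩ := Finset.card_eq_two.mp (q.card_two s hs)
      have hside : ∀ t ∈ q.pairs.erase s, ∀ i ∈ t, ∀ j ∈ t, i ≠ j →
          (∀ d : ZMod n, (∀ u ∈ q.pairs.erase s, d ∉ u) → cyclicBetween n i j d) ∨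
          (∀ d : ZMod n, (∀ u ∈ q.pairs.erase s, d ∉ u) → cyclicBetween n j i d) := by
        intro t htm i hi j hj hij
        obtain ⟨htne, htp⟩ := Finset.mem_erase.mp htm
        have hdisj := q.disj s hs t htp (fun h => htne h.symm)
        have hant : α ∉ t := Finset.disjoint_left.mp hdisj (by rw [hsab]; simp)
        have hbnt : β ∉ t := Finset.disjoint_left.mp hdisj (by rw [hsab]; simp)
        have hαs : α ∈ s := by rw [hsab]; simp
        have hβs : β ∈ s := by rw [hsab]; simp
        have hkey : ∀ d' : ZMod n, (∀ u ∈ q.pairs.erase s, d' ∉ u) → d' = α ∨ d' = β := by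
          intro d' hd'
          by_cases h1 : d' ∈ s
          · rw [hsab] at h1; simpa using h1
          · exfalso
            have hdd : d' ∈ q.defects := mem_defects.mpr (fun u hu => by
              by_cases hus : u = s
              · rw [hus]; exact h1
              · exact hd' u (Finset.mem_erase.mpr ⟨hus, hu⟩))
            rw [hdef0] at hdd
            simp at hdd
        rcases btw_total (k := α) hij (fun h => hant (by rw [h]; exact hi))
          (fun h => hant (by rw [h]; exact hj)) with hα | hα
        · have hβ : btw i j β := closed_btw htp hi hj hij hs hαs hβs hα
          left
          intro d' hd'
          rw [cb_iff]
          rcases hkey d' hd' with rfl | rfl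
          · exact hα
          · exact hβ
        · have hβ : btw j i β := closed_btw htp hj hi (Ne.symm hij) hs hαs hβs hα
          right
          intro d' hd'
          rw [cb_iff]
          rcases hkey d' hd' with rfl | rfl
          · exact hα
          · exact hβ
      have hq'card : (eraseLS q s hside).pairs.card = N := by
        rw [eraseLS_pairs, Finset.card_erase_of_mem hs, hcard]
        omega
      have hd' : (eraseLS q s hside).defects = s := by
        rw [eraseLS_defects q hs hside, hdef0, Finset.empty_union]
      have hIH := (ih (eraseLS q s hside) hq'card).1 (by
        rw [hd', hsab, Finset.card_pair hab]; omega)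
      obtain ⟨_, hQ', _, _⟩ := hIH
      have hle : pairGraph n (eraseLS q s hside) (rot (eraseLS q s hside)) ≤
          pairGraph n q (rot q) := by
        apply pairGraph_mono
        · rw [eraseLS_pairs]; exact Finset.erase_subset _ _
        · rw [rot_eraseLS]; exact Finset.erase_subset _ _
      have hadj : (pairGraph n q (rot q)).Adj α β :=
        pairGraph_adj.mpr ⟨hab, Or.inl (hsab ▸ hs)⟩
      have hato : ∀ i : ZMod n, (pairGraph n q (rot q)).Reachable i α := by
        intro i
        obtain ⟨d₀, ⟨hd₀D, hd₀r⟩, _⟩ := hQ' i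
        rw [hd', hsab] at hd₀D
        rcases Finset.mem_insert.mp hd₀D with rfl | h
        · exact hd₀r.mono hle
        · have hb : d₀ = β := Finset.mem_singleton.mp h
          subst hb
          exact ((hd₀r.mono hle)).trans hadj.symm.reachable
      intro i j
      exact (hato i).trans (hato j).symm

end Stmt12

/-- Let `p` be the rotation of the annular link state `q` by one place.  If `q` has
`t ≥ 1` defects, the pair graph `Γ(q,p)` is a disjoint union of `t` paths, each containing
exactly one defect of `q` and one of `p` (so it is acyclic, `q` and `p` share no
connection, and every vertex reaches a unique defect of `q` and of `p`).  If `t = 0`,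
then `Γ(q,p)` is a single cycle through all `n` vertices: every vertex lies on exactly
two edges, counted with multiplicity, and the graph is connected. -/
theorem stmt_12 (n : ℕ) [NeZero n] (q p : AnnularLS n)
    (hp : p.pairs = q.pairs.image (fun s => s.image (· + 1)))
    (t : ℕ) (ht : q.defects.card = t) :
    (1 ≤ t →
      Disjoint q.pairs p.pairs ∧
      (pairGraph n q p).IsAcyclic ∧
      (∀ i : ZMod n, ∃! d : ZMod n, d ∈ q.defects ∧ (pairGraph n q p).Reachable i d) ∧
      (∀ i : ZMod n, ∃! d : ZMod n, d ∈ p.defects ∧ (pairGraph n q p).Reachable i d)) ∧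
    (t = 0 →
      (∀ i j : ZMod n, (pairGraph n q p).Reachable i j) ∧
      (∀ i : ZMod n,
        Multiset.card ((q.pairs.val + p.pairs.val).filter (fun s => i ∈ s)) = 2)) := by

  have hpairs : p.pairs = (Stmt12.rot q).pairs := by
    rw [hp, Stmt12.rot_pairs]
  have hpG : pairGraph n q p = pairGraph n q (Stmt12.rot q) :=
    Stmt12.pairGraph_congr hpairs
  have hpdef : p.defects = (Stmt12.rot q).defects := Stmt12.defects_congr hpairs
  obtain ⟨hM1, hM2⟩ := Stmt12.master q.pairs.card q rfl
  constructor
  · intro h1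
    have htt : 1 ≤ q.defects.card := by rw [ht]; exact h1
    obtain ⟨hA, hB, hC, _⟩ := hM1 htt
    refine ⟨?_, ?_, ?_, ?_⟩
    · have hD := Stmt12.pairs_disjoint_rot q htt
      rwa [← hpairs] at hD
    · rw [hpG]; exact hA
    · rw [hpG]; exact hB
    · rw [hpG, hpdef]; exact hC
  · intro h0
    have h0' : q.defects.card = 0 := by rw [ht]; exact h0
    have hqd : q.defects = ∅ := Finset.card_eq_zero.mp h0'
    have hmatched : ∀ v : ZMod n, ∃ s ∈ q.pairs, v ∈ s := by
      intro v
      by_contra hcon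
      push_neg at hcon
      have hv : v ∈ q.defects := Stmt12.mem_defects.mpr hcon
      rw [hqd] at hv
      simp at hv
    constructor
    · intro i j
      rw [hpG]
      exact hM2 h0' i j
    · intro i
      have hmp : ∃ s ∈ p.pairs, i ∈ s := by
        obtain ⟨s, hs, hmem⟩ := hmatched (i - 1)
        refine ⟨s.image (· + 1), ?_, ?_⟩
        · rw [hp]; exact Finset.mem_image_of_mem _ hs
        · exact Finset.mem_image.mpr ⟨i - 1, hmem, by ring⟩
      rw [Multiset.filter_add, Multiset.card_add,
        Stmt12.filter_mem_card_one (hmatched i), Stmt12.filter_mem_card_one hmp]
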